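/- In the free monoid on a finite set X with |X| ≥ 2, the word-reversal map υ is not a monoid homomorphism, but ν ↦ υ ∘ ν ∘ υ sends monoid endomorphisms to monoid endomorphisms; moreover this map is not inner: there is no monoid automorphism σ of the free monoid with υ ∘ ν ∘ υ = σ ∘ ν ∘ σ⁻¹ for all endomorphisms ν. -/

import Mathlib

/-- Word reversal on a free monoid. -/
def mirror {X : Type*} (w : FreeMonoid X) : FreeMonoid X :=
  FreeMonoid.ofList (FreeMonoid.toList w).reverse

namespace MirrorAux

variable {X : Type*}

lemma mirror_mul (a b : FreeMonoid X) : mirror (a * b) = mirror b * mirror a := by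
  simp [mirror, FreeMonoid.toList_mul, List.reverse_append, FreeMonoid.ofList_append]

lemma mirror_one : mirror (1 : FreeMonoid X) = 1 := rfl

lemma mirror_of (a : X) : mirror (FreeMonoid.of a) = FreeMonoid.of a := rfl

lemma mirror_mirror (w : FreeMonoid X) : mirror (mirror w) = w := by
  simp [mirror]

lemma mirror_len (w : FreeMonoid X) :
    (FreeMonoid.toList (mirror w)).length = (FreeMonoid.toList w).length := by
  simp [mirror]

/-- the constant-letter endomorphism -/
def nu (a : X) : Monoid.End (FreeMonoid X) := FreeMonoid.lift (fun _ => FreeMonoid.of a)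

lemma nu_apply (a : X) (w : FreeMonoid X) :
    nu a w = FreeMonoid.ofList (List.replicate (FreeMonoid.toList w).length a) := by
  induction w using FreeMonoid.inductionOn' with
  | one => rfl
  | of_mul b w ih =>
      have : nu a (FreeMonoid.of b * w) = nu a (FreeMonoid.of b) * nu a w := map_mul _ _ _
      rw [this, ih]
      have h1 : nu a (FreeMonoid.of b) = FreeMonoid.of a := FreeMonoid.lift_eval_of _ b
      rw [h1]
      simp [FreeMonoid.toList_mul, FreeMonoid.toList_of, List.replicate_succ,
        ← FreeMonoid.ofList_append]

lemma mirror_nu (a : X) (w : FreeMonoid X) : mirror (nu a (mirror w)) = nu a w := by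
  rw [nu_apply, nu_apply, mirror_len]
  simp [mirror, List.reverse_replicate]

lemma len_hom (σ : FreeMonoid X ≃* FreeMonoid X) (k : ℕ)
    (hk : ∀ a : X, σ (FreeMonoid.of a) = FreeMonoid.ofList (List.replicate k a))
    (w : FreeMonoid X) :
    (FreeMonoid.toList (σ w)).length = k * (FreeMonoid.toList w).length := by
  induction w using FreeMonoid.inductionOn' with
  | one => simp
  | of_mul b w ih =>
      rw [map_mul, FreeMonoid.toList_mul, List.length_append, ih, hk,
        FreeMonoid.toList_ofList, List.length_replicate, FreeMonoid.toList_mul,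
        FreeMonoid.toList_of, List.length_append, List.length_singleton]
      ring

end MirrorAux

open MirrorAux in
/-- On the free monoid over a set with at least two elements, the word-reversal map
`υ` is not a monoid homomorphism; nevertheless `ν ↦ υ ∘ ν ∘ υ` maps monoid
endomorphisms to monoid endomorphisms, and the resulting automorphism of `End(S)` is
not inner: no monoid automorphism `σ` of `S` conjugates to it. -/
theorem mirror_automorphism_not_inner (X : Type*) (x y : X) (hxy : x ≠ y) :
    (¬ ∀ a b : FreeMonoid X, mirror (a * b) = mirror a * mirror b) ∧
    (∀ ν : Monoid.End (FreeMonoid X), ∃ μ : Monoid.End (FreeMonoid X),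
      (μ : FreeMonoid X → FreeMonoid X) = mirror ∘ ν ∘ mirror) ∧
    ¬ ∃ σ : FreeMonoid X ≃* FreeMonoid X, ∀ ν : Monoid.End (FreeMonoid X),
      mirror ∘ (ν : FreeMonoid X → FreeMonoid X) ∘ mirror =
        (σ : FreeMonoid X → FreeMonoid X) ∘ ν ∘
          (σ.symm : FreeMonoid X → FreeMonoid X) := by
  refine ⟨?_, ?_, ?_⟩
  · intro h
    have := h (FreeMonoid.of x) (FreeMonoid.of y)
    rw [mirror_of, mirror_of] at this
    have h2 := congrArg FreeMonoid.toList this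
    simp [mirror, FreeMonoid.toList_mul, FreeMonoid.toList_of] at h2
    exact hxy h2.1.symm
  · intro ν
    refine ⟨FreeMonoid.lift (fun a => mirror (ν (FreeMonoid.of a))), ?_⟩
    funext w
    induction w using FreeMonoid.inductionOn' with
    | one =>
        simp [mirror_one]
        exact MonoidHom.map_one _
    | of_mul b w ih =>
        simp only [Function.comp_apply] at ih ⊢
        replace ih : (FreeMonoid.lift fun a => mirror (ν (FreeMonoid.of a))) w = _ := ih
        show (FreeMonoid.lift fun a => mirror (ν (FreeMonoid.of a))) (FreeMonoid.of b * w) = _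
        rw [map_mul, FreeMonoid.lift_eval_of, ih, mirror_mul, map_mul, mirror_mul,
          mirror_of]
  · rintro ⟨σ, h⟩
    -- σ (of a) = replicate k a for all a
    have key : ∀ a b : X, σ (FreeMonoid.of a) =
        FreeMonoid.ofList (List.replicate (FreeMonoid.toList (σ (FreeMonoid.of b))).length a) := by
      intro a b
      have h1 := congrFun (h (nu a)) (σ (FreeMonoid.of b))
      simp only [Function.comp_apply, MulEquiv.symm_apply_apply] at h1
      have h2 : (nu a : Monoid.End (FreeMonoid X)) (FreeMonoid.of b) = FreeMonoid.of a :=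
        FreeMonoid.lift_eval_of _ b
      rw [h2] at h1
      rw [← h1, mirror_nu, nu_apply]
    set k := (FreeMonoid.toList (σ (FreeMonoid.of x))).length with hk
    have hka : ∀ a : X, σ (FreeMonoid.of a) = FreeMonoid.ofList (List.replicate k a) :=
      fun a => key a x
    -- surjectivity: some w maps to of x
    obtain ⟨w, hw⟩ := σ.surjective (FreeMonoid.of x)
    have hlen := len_hom σ k hka w
    rw [hw, FreeMonoid.toList_of, List.length_singleton] at hlen
    have hk1 : k = 1 := Nat.eq_one_of_dvd_one ⟨_, hlen⟩
    -- hence σ = id on generators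
    have hid : ∀ a : X, σ (FreeMonoid.of a) = FreeMonoid.of a := by
      intro a; rw [hka a, hk1]; rfl
    have hsymm : ∀ a : X, σ.symm (FreeMonoid.of a) = FreeMonoid.of a := by
      intro a
      have := hid a
      rw [← this, MulEquiv.symm_apply_apply]
      exact this.symm
    -- contradiction with ν sending every letter to xy
    set ν : Monoid.End (FreeMonoid X) :=
      FreeMonoid.lift (fun _ : X => FreeMonoid.of x * FreeMonoid.of y) with hν
    have h1 := congrFun (h ν) (FreeMonoid.of x)
    simp only [Function.comp_apply] at h1
    rw [hsymm x, mirror_of] at h1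
    have h2 : ν (FreeMonoid.of x) = FreeMonoid.of x * FreeMonoid.of y :=
      FreeMonoid.lift_eval_of _ x
    rw [h2, map_mul, hid x, hid y, mirror_mul, mirror_of, mirror_of] at h1
    have h3 := congrArg FreeMonoid.toList h1
    simp [FreeMonoid.toList_mul, FreeMonoid.toList_of] at h3
    exact hxy h3.1.symm
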